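/- Let k be a field, V a finite-dimensional k-vector space, S = GL(V), and H a closed algebraic subgroup of S, so that S is a (left) H-variety. Let h_H be an H-equivariant pretheory over k. Then the pull-back φ*_H : h_H(pt) → h_H(S) induced by the structure map φ : S → pt (with trivial H-action on pt) is surjective. -/

import Mathlib

/-!
# Statement 0

Let `k` be a field, `V` a finite-dimensional `k`-vector space, `S = GL(V)`, and `H` a
closed algebraic subgroup of `S`, so that `S` is a (left) `H`-variety.  Let `h_H` be an
`H`-equivariant pretheory over `k`.  Then the pull-back `φ*_H : h_H(pt) → h_H(S)` induced
by the structure map `φ : S → pt` (with trivial `H`-action on `pt`) is surjective.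

Since the category of smooth `H`-varieties over `k` is not available in Mathlib, we model
it by an abstract category `C` equipped with a distinguished point object `pt = Spec k`,
affine spaces `𝔸ⁿ_k` (with trivial actions on the point), and a distinguished class of
(`H`-equivariant) open embeddings.  An `H`-equivariant pretheory is a contravariant
functor from `C` to abelian groups satisfying (H) homotopy invariance and (L)
localization.  The geometric input (from the paper, following Karpenko–Merkurjev), namely
that `S = GL(V)` embeds `S`-equivariantly (hence `H`-equivariantly) as an open subvariety
of the affine space `End_k(V) ≅ 𝔸^{(dim V)²}` compatibly with the structure maps to the
point, is recorded by the hypotheses `hι`, `hfac`.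
-/

open CategoryTheory

universe u v w

/-- An abstract model of the category of smooth `H`-varieties over a field `k` (for an
algebraic group `H`): a category equipped with a distinguished point `pt = Spec k` (with
trivial `H`-action), affine spaces `𝔸ⁿ_k` with their structure morphisms to the point,
and a distinguished class of (`H`-equivariant) open embeddings. -/
class SmoothHVarieties (C : Type u) [Category.{v} C] : Type (max u v) where
  /-- the point `Spec k` with trivial `H`-action -/
  pt : C
  /-- the affine space `𝔸ⁿ_k` -/
  aff : ℕ → C
  /-- the structure morphism `𝔸ⁿ_k → pt` -/
  affStruct : ∀ n : ℕ, aff n ⟶ pt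
  /-- the class of `H`-equivariant open embeddings -/
  IsOpenEmbedding : ∀ {X Y : C}, (X ⟶ Y) → Prop

open SmoothHVarieties

/-- An `H`-equivariant pretheory over `k` (Definition 2.1 of Gille–Zainoulline):
a contravariant functor `h_H` from the category of smooth `H`-varieties over `k` to
abelian groups satisfying

* (H) homotopy invariance: the pull-back along the (`H`-equivariant) structure map
  `𝔸ⁿ_k → pt` is an isomorphism, and
* (L) localization: the pull-back along any `H`-equivariant open embedding is surjective.
-/
structure EquivariantPretheory (C : Type u) [Category.{v} C] [SmoothHVarieties C] :
    Type (max u v (w + 1)) where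
  /-- the underlying contravariant functor to abelian groups -/
  h : Cᵒᵖ ⥤ AddCommGrpCat.{w}
  /-- (H) homotopy invariance -/
  homotopy : ∀ n : ℕ, Function.Bijective ⇑(h.map (affStruct (C := C) n).op)
  /-- (L) localization -/
  localization : ∀ {U X : C} (ι : U ⟶ X), IsOpenEmbedding ι →
    Function.Surjective ⇑(h.map ι.op)

/-- Lemma 4.1 of Gille–Zainoulline: for `S = GL(V)` viewed as an
`H`-variety, `H ⊆ S` a closed subgroup, and any `H`-equivariant pretheory `h_H`, the
pull-back `φ*_H : h_H(pt) → h_H(S)` along the structure map `φ : S → pt` is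
surjective. -/
theorem structure_map_pullback_surjective
    -- the base field `k` and the finite-dimensional `k`-vector space `V`
    (k : Type*) [Field k] (V : Type*) [AddCommGroup V] [Module k V] [FiniteDimensional k V]
    -- the category of smooth `H`-varieties over `k`, for `H` a closed subgroup of `GL(V)`
    {C : Type u} [Category.{v} C] [SmoothHVarieties C]
    -- an `H`-equivariant pretheory over `k`
    (hH : EquivariantPretheory.{u, v, w} C)
    -- `S = GL(V)`, viewed as a smooth `H`-variety via left multiplication
    (S : C)
    -- the structure map `φ : S → pt` (trivial `H`-action on `pt`)
    (φ : S ⟶ pt (C := C))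
    -- `S = GL(V)` embeds `H`-equivariantly as an open subvariety of the affine space
    -- `End_k(V) ≅ 𝔸^{(dim V)²}_k` ...
    (ι : S ⟶ aff (C := C) (Module.finrank k V ^ 2))
    (hι : IsOpenEmbedding (C := C) ι)
    -- ... compatibly with the structure maps to the point
    (hfac : φ = ι ≫ affStruct (Module.finrank k V ^ 2)) :
    Function.Surjective ⇑(hH.h.map φ.op) := by
  subst hfac
  rw [CategoryTheory.op_comp, hH.h.map_comp, AddCommGrpCat.coe_comp]
  exact Function.Surjective.comp (hH.localization ι hι)
    (hH.homotopy (Module.finrank k V ^ 2)).surjective
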